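/- arXiv:2510.15359 — 2 statements merged into one kernel-verified Lean document; each statement's English description precedes it below -/
import Mathlib

section
/- For m ∈ ℕ and p > 1, define V_p : ℝ^m → ℝ^m by V_p(z) = |z|^((p−2)/2)·z (with V_p(0)=0). Then there exists a constant c_V = c_V(m,p) > 0 such that for all z₁, z₂ ∈ ℝ^m not both zero, (1/c_V)·|z₁ − z₂| ≤ |V_p(z₁) − V_p(z₂)| / (|z₁| + |z₂|)^((p−2)/2) ≤ c_V·|z₁ − z₂|. -/
open Real

noncomputable def VMB.cc (β : ℝ) : ℝ := 2 ^ (β + 2) * (β + β⁻¹ + 1)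

namespace VMB

variable {β a b : ℝ}

lemma fac_nonneg (hβ : 1/2 < β) : (1:ℝ) ≤ β + β⁻¹ + 1 := by
  have hβ0 : 0 < β := by linarith
  have : 0 < β⁻¹ := by positivity
  linarith

lemma cc_pos (hβ : 1/2 < β) : 0 < cc β := by
  have h1 : (0:ℝ) < 2 ^ (β + 2) := rpow_pos_of_pos two_pos _
  have h2 := fac_nonneg hβ
  unfold cc; nlinarith

lemma pow_le_cc (hβ : 1/2 < β) {e : ℝ} (he : e ≤ β + 2) : (2:ℝ) ^ e ≤ cc β := by
  have h1 : (2:ℝ) ^ e ≤ 2 ^ (β + 2) := rpow_le_rpow_of_exponent_le one_le_two he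
  have h2 := fac_nonneg hβ
  have h3 : (0:ℝ) < 2 ^ (β + 2) := rpow_pos_of_pos two_pos _
  unfold cc; nlinarith

lemma num_le_cc (hβ : 1/2 < β) {t : ℝ} (ht0 : 0 ≤ t) (ht : t ≤ β + β⁻¹ + 1) : t ≤ cc β := by
  have h1 : (1:ℝ) ≤ 2 ^ (β + 2) := by
    have := rpow_le_rpow_of_exponent_le one_le_two (show (0:ℝ) ≤ β + 2 by linarith)
    rwa [rpow_zero] at this
  have h2 := fac_nonneg hβ
  unfold cc; nlinarith

lemma two_le_fac (hβ : 1/2 < β) : (2:ℝ) ≤ β + β⁻¹ + 1 := by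
  have hβ0 : 0 < β := by linarith
  have h := mul_inv_cancel₀ hβ0.ne'
  have h2 : 0 < β⁻¹ := by positivity
  nlinarith [sq_nonneg (β - 1)]

/-- Bernoulli: for `β ≥ 1`, `1 - x^β ≤ β (1 - x)` for `x ≥ 0`. -/
lemma bern_ge {x : ℝ} (hx : 0 ≤ x) (hβ : 1 ≤ β) : 1 - x ^ β ≤ β * (1 - x) := by
  have h := one_add_mul_self_le_rpow_one_add (s := x - 1) (by linarith) hβ
  have hx1 : 1 + (x - 1) = x := by ring
  rw [hx1] at h
  nlinarith

/-- Bernoulli: for `0 ≤ β ≤ 1`, `β (1 - x) ≤ 1 - x^β` for `x ≥ 0`. -/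
lemma bern_le {x : ℝ} (hx : 0 ≤ x) (hβ0 : 0 ≤ β) (hβ1 : β ≤ 1) : β * (1 - x) ≤ 1 - x ^ β := by
  have h := rpow_one_add_le_one_add_mul_self (s := x - 1) (by linarith) hβ0 hβ1
  have hx1 : 1 + (x - 1) = x := by ring
  rw [hx1] at h
  nlinarith

lemma mvt_upper (hβ : 1 ≤ β) (ha : 0 < a) (hb : 0 ≤ b) :
    a ^ β - b ^ β ≤ β * (a ^ (β - 1) * (a - b)) := by
  have hx : 0 ≤ b / a := div_nonneg hb ha.le
  have h := bern_ge hx hβ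
  have hap : (0:ℝ) < a ^ β := rpow_pos_of_pos ha β
  have key := mul_le_mul_of_nonneg_left h hap.le
  have e2 : (b / a) ^ β = b ^ β / a ^ β := div_rpow hb ha.le β
  have e3 : a ^ β * (1 - (b / a) ^ β) = a ^ β - b ^ β := by
    rw [e2]; field_simp
  have e4 : a ^ β * (β * (1 - b / a)) = β * (a ^ (β - 1) * (a - b)) := by
    rw [Real.rpow_sub_one ha.ne']; field_simp
  rw [e3, e4] at key; exact key

lemma mvt_lower (hβ0 : 0 < β) (hβ1 : β ≤ 1) (ha : 0 < a) (hb : 0 ≤ b) :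
    β * (a ^ (β - 1) * (a - b)) ≤ a ^ β - b ^ β := by
  have hx : 0 ≤ b / a := div_nonneg hb ha.le
  have h := bern_le hx hβ0.le hβ1
  have hap : (0:ℝ) < a ^ β := rpow_pos_of_pos ha β
  have key := mul_le_mul_of_nonneg_left h hap.le
  have e2 : (b / a) ^ β = b ^ β / a ^ β := div_rpow hb ha.le β
  have e3 : a ^ β * (1 - (b / a) ^ β) = a ^ β - b ^ β := by
    rw [e2]; field_simp
  have e4 : a ^ β * (β * (1 - b / a)) = β * (a ^ (β - 1) * (a - b)) := by
    rw [Real.rpow_sub_one ha.ne']; field_simp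
  rw [e3, e4] at key; exact key

lemma cross_upper (hβ0 : 0 < β) (hβ1 : β ≤ 1) (ha : 0 < a) (hb : 0 ≤ b) (hba : b ≤ a) :
    a ^ (β - 1) * b ≤ b ^ β := by
  rcases eq_or_lt_of_le hb with h0 | h0
  · rw [← h0, Real.zero_rpow hβ0.ne']; simp
  · have h1 : a ^ (β - 1) ≤ b ^ (β - 1) :=
      Real.rpow_le_rpow_of_nonpos h0 hba (by linarith)
    have h2 : b ^ (β - 1) * b = b ^ β := by
      rw [Real.rpow_sub_one h0.ne']; field_simp
    nlinarith

lemma cross_lower (hβ : 1 ≤ β) (ha : 0 < a) (hb : 0 ≤ b) (hba : b ≤ a) :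
    b ^ β ≤ a ^ (β - 1) * b := by
  rcases eq_or_lt_of_le hb with h0 | h0
  · rw [← h0, Real.zero_rpow (by linarith : β ≠ 0)]; simp
  · have h1 : b ^ (β - 1) ≤ a ^ (β - 1) :=
      Real.rpow_le_rpow h0.le hba (by linarith)
    have h2 : b ^ (β - 1) * b = b ^ β := by
      rw [Real.rpow_sub_one h0.ne']; field_simp
    nlinarith

lemma hpow_a (ha : 0 < a) : a ^ (β - 1) * a = a ^ β := by
  rw [Real.rpow_sub_one ha.ne']; field_simp

lemma E1u (hβ : 1/2 < β) (ha : 0 < a) (hb : 0 ≤ b) (hba : b ≤ a) :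
    a ^ β - b ^ β ≤ cc β * ((a - b) * (a + b) ^ (β - 1)) := by
  have hβ0 : (0:ℝ) < β := by linarith
  have hs : 0 < a + b := by linarith
  have hsK : (0:ℝ) ≤ (a + b) ^ (β - 1) := rpow_nonneg hs.le _
  rcases le_or_gt β 1 with h1 | h1
  · -- step1 : a^β - b^β ≤ a^(β-1) * (a - b)
    have hc := cross_upper hβ0 h1 ha hb hba
    have hpa := hpow_a (β := β) ha
    have step1 : a ^ β - b ^ β ≤ a ^ (β - 1) * (a - b) := by nlinarith
    -- a^(β-1) ≤ 2^(1-β) * (a+b)^(β-1)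
    have h2a : (2 * a) ^ (β - 1) ≤ (a + b) ^ (β - 1) :=
      Real.rpow_le_rpow_of_nonpos hs (by linarith) (by linarith)
    have e2a : (2 * a) ^ (β - 1) = 2 ^ (β - 1) * a ^ (β - 1) :=
      Real.mul_rpow (by norm_num) ha.le
    have hinv : (2:ℝ) ^ (1 - β) * 2 ^ (β - 1) = 1 := by
      rw [← Real.rpow_add two_pos]; norm_num
    have h2pos : (0:ℝ) < 2 ^ (1 - β) := rpow_pos_of_pos two_pos _
    have h2 : a ^ (β - 1) ≤ 2 ^ (1 - β) * (a + b) ^ (β - 1) := by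
      have hm := mul_le_mul_of_nonneg_left (e2a ▸ h2a) h2pos.le
      have e : 2 ^ (1 - β) * (2 ^ (β - 1) * a ^ (β - 1)) = a ^ (β - 1) := by
        rw [← mul_assoc, hinv, one_mul]
      linarith
    have hcc : (2:ℝ) ^ (1 - β) ≤ cc β := pow_le_cc hβ (by linarith)
    calc a ^ β - b ^ β ≤ a ^ (β - 1) * (a - b) := step1
      _ ≤ (2 ^ (1 - β) * (a + b) ^ (β - 1)) * (a - b) :=
          mul_le_mul_of_nonneg_right h2 (by linarith)
      _ = 2 ^ (1 - β) * ((a - b) * (a + b) ^ (β - 1)) := by ring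
      _ ≤ cc β * ((a - b) * (a + b) ^ (β - 1)) :=
          mul_le_mul_of_nonneg_right hcc (mul_nonneg (by linarith) hsK)
  · have step1 := mvt_upper h1.le ha hb
    have h2 : a ^ (β - 1) ≤ (a + b) ^ (β - 1) :=
      Real.rpow_le_rpow ha.le (by linarith) (by linarith)
    have hcc : β ≤ cc β := by
      apply num_le_cc hβ hβ0.le
      have : 0 < β⁻¹ := by positivity
      linarith
    calc a ^ β - b ^ β ≤ β * (a ^ (β - 1) * (a - b)) := step1
      _ ≤ β * ((a + b) ^ (β - 1) * (a - b)) := by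
          apply mul_le_mul_of_nonneg_left _ hβ0.le
          exact mul_le_mul_of_nonneg_right h2 (by linarith)
      _ = β * ((a - b) * (a + b) ^ (β - 1)) := by ring
      _ ≤ cc β * ((a - b) * (a + b) ^ (β - 1)) :=
          mul_le_mul_of_nonneg_right hcc (mul_nonneg (by linarith) hsK)

lemma E1l (hβ : 1/2 < β) (ha : 0 < a) (hb : 0 ≤ b) (hba : b ≤ a) :
    (a - b) * (a + b) ^ (β - 1) ≤ cc β * (a ^ β - b ^ β) := by
  have hβ0 : (0:ℝ) < β := by linarith
  have hs : 0 < a + b := by linarith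
  have hdiff : 0 ≤ a ^ β - b ^ β := sub_nonneg.2 (Real.rpow_le_rpow hb hba hβ0.le)
  rcases le_or_gt β 1 with h1 | h1
  · have step1 := mvt_lower hβ0 h1 ha hb
    have h2 : (a + b) ^ (β - 1) ≤ a ^ (β - 1) :=
      Real.rpow_le_rpow_of_nonpos ha (by linarith) (by linarith)
    have h3 : a ^ (β - 1) * (a - b) ≤ β⁻¹ * (a ^ β - b ^ β) := by
      have h4 := mul_le_mul_of_nonneg_left step1 (by positivity : (0:ℝ) ≤ β⁻¹)
      have h5 : β⁻¹ * β = 1 := inv_mul_cancel₀ hβ0.ne'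
      nlinarith
    have hcc : β⁻¹ ≤ cc β := by
      apply num_le_cc hβ (by positivity)
      linarith
    calc (a - b) * (a + b) ^ (β - 1) ≤ (a - b) * a ^ (β - 1) :=
          mul_le_mul_of_nonneg_left h2 (by linarith)
      _ = a ^ (β - 1) * (a - b) := by ring
      _ ≤ β⁻¹ * (a ^ β - b ^ β) := h3
      _ ≤ cc β * (a ^ β - b ^ β) := mul_le_mul_of_nonneg_right hcc hdiff
  · have hc := cross_lower h1.le ha hb hba
    have hpa := hpow_a (β := β) ha
    have step1 : a ^ (β - 1) * (a - b) ≤ a ^ β - b ^ β := by nlinarith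
    have h2a : (a + b) ^ (β - 1) ≤ (2 * a) ^ (β - 1) :=
      Real.rpow_le_rpow hs.le (by linarith) (by linarith)
    have e2a : (2 * a) ^ (β - 1) = 2 ^ (β - 1) * a ^ (β - 1) :=
      Real.mul_rpow (by norm_num) ha.le
    have h2pos : (0:ℝ) ≤ (2:ℝ) ^ (β - 1) := (rpow_pos_of_pos two_pos _).le
    have hcc : (2:ℝ) ^ (β - 1) ≤ cc β := pow_le_cc hβ (by linarith)
    have hanneg : (0:ℝ) ≤ a ^ (β - 1) := rpow_nonneg ha.le _
    calc (a - b) * (a + b) ^ (β - 1) ≤ (a - b) * (2 ^ (β - 1) * a ^ (β - 1)) := by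
          rw [← e2a]; exact mul_le_mul_of_nonneg_left h2a (by linarith)
      _ = 2 ^ (β - 1) * (a ^ (β - 1) * (a - b)) := by ring
      _ ≤ 2 ^ (β - 1) * (a ^ β - b ^ β) := mul_le_mul_of_nonneg_left step1 h2pos
      _ ≤ cc β * (a ^ β - b ^ β) := mul_le_mul_of_nonneg_right hcc hdiff

lemma E2u (hβ : 1/2 < β) (ha : 0 < a) (hb : 0 ≤ b) (hba : b ≤ a) :
    a ^ β + b ^ β ≤ cc β * (a + b) ^ β := by
  have hβ0 : (0:ℝ) < β := by linarith
  have hs : 0 < a + b := by linarith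
  have h1 : a ^ β ≤ (a + b) ^ β := Real.rpow_le_rpow ha.le (by linarith) hβ0.le
  have h2 : b ^ β ≤ (a + b) ^ β := Real.rpow_le_rpow hb (by linarith) hβ0.le
  have hcc : (2:ℝ) ≤ cc β := num_le_cc hβ (by norm_num) (two_le_fac hβ)
  have hsp : (0:ℝ) ≤ (a + b) ^ β := rpow_nonneg hs.le _
  nlinarith

lemma E2l (hβ : 1/2 < β) (ha : 0 < a) (hb : 0 ≤ b) (hba : b ≤ a) :
    (a + b) ^ β ≤ cc β * (a ^ β + b ^ β) := by
  have hβ0 : (0:ℝ) < β := by linarith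
  have hs : 0 < a + b := by linarith
  have h1 : (a + b) ^ β ≤ (2 * a) ^ β := Real.rpow_le_rpow hs.le (by linarith) hβ0.le
  have e1 : (2 * a) ^ β = 2 ^ β * a ^ β := Real.mul_rpow (by norm_num) ha.le
  have hcc : (2:ℝ) ^ β ≤ cc β := pow_le_cc hβ (by linarith)
  have hbp : (0:ℝ) ≤ b ^ β := rpow_nonneg hb _
  have hap : (0:ℝ) ≤ a ^ β := rpow_nonneg ha.le _
  have h2pos : (0:ℝ) ≤ (2:ℝ) ^ β := (rpow_pos_of_pos two_pos _).le
  nlinarith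

lemma sq_le_sq_iff {x y : ℝ} (hx : 0 ≤ x) (hy : 0 ≤ y) (h : x ^ 2 ≤ y ^ 2) : x ≤ y := by
  have := Real.sqrt_le_sqrt h
  rwa [Real.sqrt_sq hx, Real.sqrt_sq hy] at this

end VMB

set_option maxHeartbeats 1600000 in
open VMB in
theorem V_map_bilipschitz (m : ℕ) (p : ℝ) (hp : 1 < p) :
    ∃ cV : ℝ, 0 < cV ∧ ∀ z₁ z₂ : EuclideanSpace ℝ (Fin m), (z₁ ≠ 0 ∨ z₂ ≠ 0) →
      (1 / cV) * ‖z₁ - z₂‖ ≤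
        ‖(‖z₁‖ ^ ((p - 2) / 2)) • z₁ - (‖z₂‖ ^ ((p - 2) / 2)) • z₂‖ /
          (‖z₁‖ + ‖z₂‖) ^ ((p - 2) / 2) ∧
      ‖(‖z₁‖ ^ ((p - 2) / 2)) • z₁ - (‖z₂‖ ^ ((p - 2) / 2)) • z₂‖ /
          (‖z₁‖ + ‖z₂‖) ^ ((p - 2) / 2) ≤ cV * ‖z₁ - z₂‖ := by
  have hβ : 1/2 < p/2 := by linarith
  set β := p/2 with hβdef
  -- The key symmetric-reduced statement
  have hkey : ∀ z₁ z₂ : EuclideanSpace ℝ (Fin m), ‖z₂‖ ≤ ‖z₁‖ → 0 < ‖z₁‖ →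
      (1 / cc β) * ‖z₁ - z₂‖ ≤
        ‖(‖z₁‖ ^ (β - 1)) • z₁ - (‖z₂‖ ^ (β - 1)) • z₂‖ / (‖z₁‖ + ‖z₂‖) ^ (β - 1) ∧
      ‖(‖z₁‖ ^ (β - 1)) • z₁ - (‖z₂‖ ^ (β - 1)) • z₂‖ / (‖z₁‖ + ‖z₂‖) ^ (β - 1) ≤
        cc β * ‖z₁ - z₂‖ := by
    intro z₁ z₂ hba ha
    have hβ0 : (0:ℝ) < β := by linarith
    set a := ‖z₁‖ with hadef
    set b := ‖z₂‖ with hbdef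
    set q : ℝ := inner ℝ z₁ z₂ with hqdef
    set c := cc β with hcdef
    have hc : 0 < c := cc_pos hβ
    have hb : 0 ≤ b := norm_nonneg _
    have hs : 0 < a + b := by linarith
    have hq := abs_real_inner_le_norm z₁ z₂
    have hq1 : q ≤ a * b := (abs_le.1 hq).2
    have hq2 : -(a * b) ≤ q := (abs_le.1 hq).1
    have hg : ‖z₁ - z₂‖ ^ 2 = a ^ 2 - 2 * q + b ^ 2 := norm_sub_sq_real z₁ z₂
    -- expansion of squared norm of V-difference
    have hf : ‖(a ^ (β - 1)) • z₁ - (b ^ (β - 1)) • z₂‖ ^ 2 =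
        (a ^ (β - 1)) ^ 2 * a ^ 2 - 2 * (a ^ (β - 1) * b ^ (β - 1)) * q
          + (b ^ (β - 1)) ^ 2 * b ^ 2 := by
      rw [norm_sub_sq_real, real_inner_smul_left, real_inner_smul_right, norm_smul, norm_smul,
        Real.norm_eq_abs, Real.norm_eq_abs, abs_of_nonneg (rpow_nonneg ha.le _),
        abs_of_nonneg (rpow_nonneg hb _)]
      ring
    have hA : a ^ (β - 1) * a = a ^ β := hpow_a ha
    have hB : b ^ (β - 1) * b = b ^ β := by
      rcases eq_or_lt_of_le hb with h0 | h0
      · rw [← h0, Real.zero_rpow hβ0.ne']; simp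
      · exact hpow_a h0
    have hf2 : ‖(a ^ (β - 1)) • z₁ - (b ^ (β - 1)) • z₂‖ ^ 2 =
        (a ^ β) ^ 2 - 2 * (a ^ (β - 1) * b ^ (β - 1)) * q + (b ^ β) ^ 2 := by
      rw [hf, ← hA, ← hB]; ring
    have hS : (a + b) ^ (β - 1) * (a + b) = (a + b) ^ β := hpow_a hs
    -- endpoint bounds, squared
    have hABnn : 0 ≤ a ^ β - b ^ β := sub_nonneg.2 (Real.rpow_le_rpow hb hba hβ0.le)
    have hAnn : (0:ℝ) ≤ a ^ β := rpow_nonneg ha.le _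
    have hBnn : (0:ℝ) ≤ b ^ β := rpow_nonneg hb _
    have hKnn : (0:ℝ) ≤ (a + b) ^ (β - 1) := rpow_nonneg hs.le _
    have he1u := E1u hβ ha hb hba
    have he1l := E1l hβ ha hb hba
    have he2u := E2u hβ ha hb hba
    have he2l := E2l hβ ha hb hba
    have h1 : (a ^ β - b ^ β) ^ 2 ≤ c ^ 2 * ((a - b) ^ 2 * ((a + b) ^ (β - 1)) ^ 2) := by
      calc (a ^ β - b ^ β) ^ 2 ≤ (c * ((a - b) * (a + b) ^ (β - 1))) ^ 2 :=
            pow_le_pow_left₀ hABnn he1u 2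
        _ = c ^ 2 * ((a - b) ^ 2 * ((a + b) ^ (β - 1)) ^ 2) := by ring
    have h2 : (a ^ β + b ^ β) ^ 2 ≤ c ^ 2 * ((a + b) ^ 2 * ((a + b) ^ (β - 1)) ^ 2) := by
      have h2' : a ^ β + b ^ β ≤ c * ((a + b) * (a + b) ^ (β - 1)) := by
        rw [mul_comm (a+b) ((a+b)^(β-1)), hS]; exact he2u
      calc (a ^ β + b ^ β) ^ 2 ≤ (c * ((a + b) * (a + b) ^ (β - 1))) ^ 2 :=
            pow_le_pow_left₀ (by linarith) h2' 2
        _ = c ^ 2 * ((a + b) ^ 2 * ((a + b) ^ (β - 1)) ^ 2) := by ring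
    have h3 : (a - b) ^ 2 * ((a + b) ^ (β - 1)) ^ 2 ≤ c ^ 2 * (a ^ β - b ^ β) ^ 2 := by
      calc (a - b) ^ 2 * ((a + b) ^ (β - 1)) ^ 2
            = ((a - b) * (a + b) ^ (β - 1)) ^ 2 := by ring
        _ ≤ (c * (a ^ β - b ^ β)) ^ 2 :=
            pow_le_pow_left₀ (mul_nonneg (by linarith) hKnn) he1l 2
        _ = c ^ 2 * (a ^ β - b ^ β) ^ 2 := by ring
    have h4 : (a + b) ^ 2 * ((a + b) ^ (β - 1)) ^ 2 ≤ c ^ 2 * (a ^ β + b ^ β) ^ 2 := by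
      have h4' : (a + b) * (a + b) ^ (β - 1) ≤ c * (a ^ β + b ^ β) := by
        rw [mul_comm (a+b) ((a+b)^(β-1)), hS]; exact he2l
      calc (a + b) ^ 2 * ((a + b) ^ (β - 1)) ^ 2
            = ((a + b) * (a + b) ^ (β - 1)) ^ 2 := by ring
        _ ≤ (c * (a ^ β + b ^ β)) ^ 2 :=
            pow_le_pow_left₀ (mul_nonneg hs.le hKnn) h4' 2
        _ = c ^ 2 * (a ^ β + b ^ β) ^ 2 := by ring
    have hAB : (a ^ (β - 1) * b ^ (β - 1)) * (a * b) = a ^ β * b ^ β := by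
      rw [← hA, ← hB]; ring
    -- endpoint bounds in `u`-form
    have h1'' : (a ^ β) ^ 2 - 2 * (a ^ (β - 1) * b ^ (β - 1)) * (a * b) + (b ^ β) ^ 2 ≤
        c ^ 2 * ((a - b) ^ 2 * ((a + b) ^ (β - 1)) ^ 2) := by
      have e : (a ^ β) ^ 2 - 2 * (a ^ (β - 1) * b ^ (β - 1)) * (a * b) + (b ^ β) ^ 2
          = (a ^ β - b ^ β) ^ 2 := by linear_combination (-2 : ℝ) * hAB
      rw [e]; exact h1
    have h2'' : (a ^ β) ^ 2 + 2 * (a ^ (β - 1) * b ^ (β - 1)) * (a * b) + (b ^ β) ^ 2 ≤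
        c ^ 2 * ((a + b) ^ 2 * ((a + b) ^ (β - 1)) ^ 2) := by
      have e : (a ^ β) ^ 2 + 2 * (a ^ (β - 1) * b ^ (β - 1)) * (a * b) + (b ^ β) ^ 2
          = (a ^ β + b ^ β) ^ 2 := by linear_combination (2 : ℝ) * hAB
      rw [e]; exact h2
    have h3'' : (a - b) ^ 2 * ((a + b) ^ (β - 1)) ^ 2 ≤
        c ^ 2 * ((a ^ β) ^ 2 - 2 * (a ^ (β - 1) * b ^ (β - 1)) * (a * b) + (b ^ β) ^ 2) := by
      have e : (a ^ β) ^ 2 - 2 * (a ^ (β - 1) * b ^ (β - 1)) * (a * b) + (b ^ β) ^ 2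
          = (a ^ β - b ^ β) ^ 2 := by linear_combination (-2 : ℝ) * hAB
      rw [e]; exact h3
    have h4'' : (a + b) ^ 2 * ((a + b) ^ (β - 1)) ^ 2 ≤
        c ^ 2 * ((a ^ β) ^ 2 + 2 * (a ^ (β - 1) * b ^ (β - 1)) * (a * b) + (b ^ β) ^ 2) := by
      have e : (a ^ β) ^ 2 + 2 * (a ^ (β - 1) * b ^ (β - 1)) * (a * b) + (b ^ β) ^ 2
          = (a ^ β + b ^ β) ^ 2 := by linear_combination (2 : ℝ) * hAB
      rw [e]; exact h4
    -- interpolation in q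
    have main_u : (a ^ β) ^ 2 - 2 * (a ^ (β - 1) * b ^ (β - 1)) * q + (b ^ β) ^ 2 ≤
        c ^ 2 * ((a ^ 2 - 2 * q + b ^ 2) * ((a + b) ^ (β - 1)) ^ 2) := by
      rcases eq_or_lt_of_le (mul_nonneg ha.le hb) with hab0 | hab0
      · have hq0 : q = 0 := le_antisymm (by linarith) (by linarith)
        rw [hq0]
        have hab0' : a * b = 0 := hab0.symm
        linarith [h1'', h2'']
      · have habne : (2 : ℝ) * (a * b) ≠ 0 := by positivity
        have hbne : b ≠ 0 := right_ne_zero_of_mul hab0.ne'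
        have hL0 : 0 ≤ (a * b - q) / (2 * (a * b)) := div_nonneg (by linarith) (by linarith)
        have hL1 : 0 ≤ (a * b + q) / (2 * (a * b)) := div_nonneg (by linarith) (by linarith)
        calc (a ^ β) ^ 2 - 2 * (a ^ (β - 1) * b ^ (β - 1)) * q + (b ^ β) ^ 2
            = ((a * b - q) / (2 * (a * b))) *
                ((a ^ β) ^ 2 + 2 * (a ^ (β - 1) * b ^ (β - 1)) * (a * b) + (b ^ β) ^ 2)
              + ((a * b + q) / (2 * (a * b))) *
                ((a ^ β) ^ 2 - 2 * (a ^ (β - 1) * b ^ (β - 1)) * (a * b) + (b ^ β) ^ 2) := by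
              field_simp
              ring
          _ ≤ ((a * b - q) / (2 * (a * b))) * (c ^ 2 * ((a + b) ^ 2 * ((a + b) ^ (β - 1)) ^ 2))
              + ((a * b + q) / (2 * (a * b))) * (c ^ 2 * ((a - b) ^ 2 * ((a + b) ^ (β - 1)) ^ 2)) :=
              add_le_add (mul_le_mul_of_nonneg_left h2'' hL0) (mul_le_mul_of_nonneg_left h1'' hL1)
          _ = c ^ 2 * ((a ^ 2 - 2 * q + b ^ 2) * ((a + b) ^ (β - 1)) ^ 2) := by
              field_simp
              ring
    have main_l : (a ^ 2 - 2 * q + b ^ 2) * ((a + b) ^ (β - 1)) ^ 2 ≤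
        c ^ 2 * ((a ^ β) ^ 2 - 2 * (a ^ (β - 1) * b ^ (β - 1)) * q + (b ^ β) ^ 2) := by
      rcases eq_or_lt_of_le (mul_nonneg ha.le hb) with hab0 | hab0
      · have hq0 : q = 0 := le_antisymm (by linarith) (by linarith)
        rw [hq0]
        have hab0' : a * b = 0 := hab0.symm
        linarith [h3'', h4'']
      · have habne : (2 : ℝ) * (a * b) ≠ 0 := by positivity
        have hbne : b ≠ 0 := right_ne_zero_of_mul hab0.ne'
        have hL0 : 0 ≤ (a * b - q) / (2 * (a * b)) := div_nonneg (by linarith) (by linarith)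
        have hL1 : 0 ≤ (a * b + q) / (2 * (a * b)) := div_nonneg (by linarith) (by linarith)
        calc (a ^ 2 - 2 * q + b ^ 2) * ((a + b) ^ (β - 1)) ^ 2
            = ((a * b - q) / (2 * (a * b))) * ((a + b) ^ 2 * ((a + b) ^ (β - 1)) ^ 2)
              + ((a * b + q) / (2 * (a * b))) * ((a - b) ^ 2 * ((a + b) ^ (β - 1)) ^ 2) := by
              field_simp
              ring
          _ ≤ ((a * b - q) / (2 * (a * b))) *
                (c ^ 2 * ((a ^ β) ^ 2 + 2 * (a ^ (β - 1) * b ^ (β - 1)) * (a * b) + (b ^ β) ^ 2))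
              + ((a * b + q) / (2 * (a * b))) *
                (c ^ 2 * ((a ^ β) ^ 2 - 2 * (a ^ (β - 1) * b ^ (β - 1)) * (a * b) + (b ^ β) ^ 2)) :=
              add_le_add (mul_le_mul_of_nonneg_left h4'' hL0) (mul_le_mul_of_nonneg_left h3'' hL1)
          _ = c ^ 2 * ((a ^ β) ^ 2 - 2 * (a ^ (β - 1) * b ^ (β - 1)) * q + (b ^ β) ^ 2) := by
              field_simp
              ring
    -- conclude
    set N := ‖(a ^ (β - 1)) • z₁ - (b ^ (β - 1)) • z₂‖ with hNdef
    have hNnn : 0 ≤ N := norm_nonneg _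
    have hX : 0 ≤ ‖z₁ - z₂‖ := norm_nonneg _
    have hKpos : 0 < (a + b) ^ (β - 1) := rpow_pos_of_pos hs _
    have g1 : ‖z₁ - z₂‖ * (a + b) ^ (β - 1) ≤ c * N := by
      apply sq_le_sq_iff (mul_nonneg hX hKnn) (by positivity)
      calc (‖z₁ - z₂‖ * (a + b) ^ (β - 1)) ^ 2
          = (a ^ 2 - 2 * q + b ^ 2) * ((a + b) ^ (β - 1)) ^ 2 := by rw [mul_pow, hg]
        _ ≤ c ^ 2 * ((a ^ β) ^ 2 - 2 * (a ^ (β - 1) * b ^ (β - 1)) * q + (b ^ β) ^ 2) := main_l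
        _ = (c * N) ^ 2 := by rw [mul_pow, hf2]
    have g2 : N ≤ c * (‖z₁ - z₂‖ * (a + b) ^ (β - 1)) := by
      apply sq_le_sq_iff hNnn (by positivity)
      calc N ^ 2 = (a ^ β) ^ 2 - 2 * (a ^ (β - 1) * b ^ (β - 1)) * q + (b ^ β) ^ 2 := hf2
        _ ≤ c ^ 2 * ((a ^ 2 - 2 * q + b ^ 2) * ((a + b) ^ (β - 1)) ^ 2) := main_u
        _ = (c * (‖z₁ - z₂‖ * (a + b) ^ (β - 1))) ^ 2 := by rw [mul_pow, mul_pow, hg]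
    constructor
    · rw [le_div_iff₀ hKpos]
      calc (1 / c) * ‖z₁ - z₂‖ * (a + b) ^ (β - 1)
          = (‖z₁ - z₂‖ * (a + b) ^ (β - 1)) / c := by ring
        _ ≤ (c * N) / c := by gcongr
        _ = N := by field_simp
    · rw [div_le_iff₀ hKpos]
      calc N ≤ c * (‖z₁ - z₂‖ * (a + b) ^ (β - 1)) := g2
        _ = c * ‖z₁ - z₂‖ * (a + b) ^ (β - 1) := by ring
  refine ⟨cc β, cc_pos hβ, ?_⟩
  intro z₁ z₂ hz
  have hep : (p - 2) / 2 = β - 1 := by rw [hβdef]; ring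
  rw [hep]
  rcases le_total ‖z₂‖ ‖z₁‖ with h | h
  · have ha : 0 < ‖z₁‖ := by
      rcases eq_or_lt_of_le (norm_nonneg z₁) with h0 | h0
      · exfalso
        have hz1 : z₁ = 0 := norm_eq_zero.1 h0.symm
        have hz2 : z₂ = 0 := norm_eq_zero.1 (le_antisymm (by rw [← h0] at h; exact h) (norm_nonneg _))
        rcases hz with h' | h' <;> exact h' (by assumption)
      · exact h0
    exact hkey z₁ z₂ h ha
  · have ha : 0 < ‖z₂‖ := by
      rcases eq_or_lt_of_le (norm_nonneg z₂) with h0 | h0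
      · exfalso
        have hz2 : z₂ = 0 := norm_eq_zero.1 h0.symm
        have hz1 : z₁ = 0 := norm_eq_zero.1 (le_antisymm (by rw [← h0] at h; exact h) (norm_nonneg _))
        rcases hz with h' | h' <;> exact h' (by assumption)
      · exact h0
    have hres := hkey z₂ z₁ h ha
    rw [norm_sub_rev z₂ z₁, norm_sub_rev ((‖z₂‖ ^ (β - 1)) • z₂) ((‖z₁‖ ^ (β - 1)) • z₁),
      add_comm ‖z₂‖ ‖z₁‖] at hres
    exact hres
end

section
/- For m ∈ ℕ and 1 < p ≤ 2, with V_p(z) = |z|^((p−2)/2)·z, there exists a constant c = c(m,p) > 0 such that for all z₁, z₂ ∈ ℝ^m, |z₁ − z₂| ≤ c·|V_p(z₁) − V_p(z₂)|^(2/p) + c·|V_p(z₁) − V_p(z₂)|·|z₂|^((2−p)/2). -/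
open Real

private lemma bernoulli_aux {θ A B : ℝ} (hθ0 : 0 ≤ θ) (hθ1 : θ ≤ 1) (hA : 0 < A) (hB : 0 ≤ B) :
    B ^ θ ≤ A ^ θ + θ * A ^ (θ - 1) * (B - A) := by
  have h := Real.geom_mean_le_arith_mean2_weighted (w₁ := θ) (w₂ := 1 - θ)
    (p₁ := B / A) (p₂ := 1) hθ0 (by linarith) (div_nonneg hB hA.le) zero_le_one (by ring)
  rw [Real.one_rpow, mul_one, mul_one] at h
  rw [Real.div_rpow hB hA.le] at h
  have hAθ : 0 < A ^ θ := Real.rpow_pos_of_pos hA θ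
  have h2 : B ^ θ ≤ (θ * (B / A) + (1 - θ)) * A ^ θ := by
    rw [div_le_iff₀ hAθ] at h; linarith
  have h3 : (θ * (B / A) + (1 - θ)) * A ^ θ = A ^ θ + θ * A ^ (θ - 1) * (B - A) := by
    rw [Real.rpow_sub hA, Real.rpow_one]
    field_simp
    ring
  linarith [h3 ▸ h2]

private lemma main_arith (p W a b : ℝ) (hp₁ : 1 < p) (hp₂ : p ≤ 2) (ha : 0 < a) (hb : 0 < b)
    (hW : 0 ≤ W) (habs : |a ^ (p / 2) - b ^ (p / 2)| ≤ W) :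
    b ^ ((2 - p) / 2) * W + |a ^ ((2 - p) / 2) - b ^ ((2 - p) / 2)| * a ^ (p / 2) ≤
      6 * W ^ (2 / p) + 6 * W * b ^ ((2 - p) / 2) := by
  have hp0 : 0 < p := by linarith
  set θ : ℝ := (2 - p) / p with hθdef
  have hθ0 : 0 ≤ θ := div_nonneg (by linarith) hp0.le
  have hθ1 : θ ≤ 1 := by
    rw [hθdef, div_le_one hp0]; linarith
  have hexp : (2 - p) / 2 = p / 2 * θ := by
    rw [hθdef]; field_simp
  rw [hexp, Real.rpow_mul ha.le, Real.rpow_mul hb.le]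
  set A : ℝ := a ^ (p / 2) with hAdef
  set B : ℝ := b ^ (p / 2) with hBdef
  have hA : 0 < A := Real.rpow_pos_of_pos ha _
  have hB : 0 < B := Real.rpow_pos_of_pos hb _
  have hAθ : 0 < A ^ θ := Real.rpow_pos_of_pos hA θ
  have hBθ : 0 < B ^ θ := Real.rpow_pos_of_pos hB θ
  have hWθ : (0:ℝ) ≤ W ^ θ := Real.rpow_nonneg hW θ
  have hW2p : (0:ℝ) ≤ W ^ (2 / p) := Real.rpow_nonneg hW _
  by_cases hc : A ≤ 2 * B
  · -- near case: bound everything by W * B^θ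
    have habs2 : |A ^ θ - B ^ θ| * A ≤ 2 * (W * B ^ θ) := by
      rcases le_total A B with hle | hle
      · have h1 : A ^ θ ≤ B ^ θ := Real.rpow_le_rpow hA.le hle hθ0
        have h2 : B ^ θ ≤ A ^ θ + θ * A ^ (θ - 1) * (B - A) := bernoulli_aux hθ0 hθ1 hA hB.le
        have h3 : B - A ≤ W := by
          have : B - A ≤ |A - B| := by rw [abs_sub_comm]; exact le_abs_self _
          linarith
        have h4 : 0 ≤ θ * A ^ (θ - 1) := by positivity
        have h5 : B ^ θ - A ^ θ ≤ θ * A ^ (θ - 1) * W := by nlinarith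
        rw [abs_of_nonpos (by linarith)]
        have hAA : A ^ (θ - 1) * A = A ^ θ := by
          rw [Real.rpow_sub hA, Real.rpow_one]; field_simp
        have hmid : θ * A ^ θ ≤ 1 * B ^ θ :=
          mul_le_mul hθ1 h1 hAθ.le zero_le_one
        calc -(A ^ θ - B ^ θ) * A = (B ^ θ - A ^ θ) * A := by ring
          _ ≤ (θ * A ^ (θ - 1) * W) * A := mul_le_mul_of_nonneg_right h5 hA.le
          _ = θ * (A ^ (θ - 1) * A) * W := by ring
          _ = θ * A ^ θ * W := by rw [hAA]
          _ ≤ 1 * B ^ θ * W := mul_le_mul_of_nonneg_right hmid hW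
          _ ≤ 2 * (W * B ^ θ) := by
              have : 0 ≤ B ^ θ * W := mul_nonneg hBθ.le hW
              nlinarith
      · have h1 : B ^ θ ≤ A ^ θ := Real.rpow_le_rpow hB.le hle hθ0
        have h2 : A ^ θ ≤ B ^ θ + θ * B ^ (θ - 1) * (A - B) := bernoulli_aux hθ0 hθ1 hB hA.le
        have h3 : A - B ≤ W := by
          have : A - B ≤ |A - B| := le_abs_self _
          linarith
        have h4 : 0 ≤ θ * B ^ (θ - 1) := by positivity
        have h5 : A ^ θ - B ^ θ ≤ θ * B ^ (θ - 1) * W := by nlinarith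
        rw [abs_of_nonneg (by linarith)]
        have hBB : B ^ (θ - 1) * B = B ^ θ := by
          rw [Real.rpow_sub hB, Real.rpow_one]; field_simp
        have h6 : 0 ≤ A ^ θ - B ^ θ := by linarith
        have h7 : 0 ≤ θ * B ^ (θ - 1) * W := by positivity
        calc (A ^ θ - B ^ θ) * A ≤ (θ * B ^ (θ - 1) * W) * (2 * B) :=
              mul_le_mul h5 hc hA.le h7
          _ = 2 * (θ * (B ^ (θ - 1) * B)) * W := by ring
          _ = 2 * (θ * B ^ θ) * W := by rw [hBB]
          _ ≤ 2 * (W * B ^ θ) := by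
              have hm : θ * B ^ θ ≤ 1 * B ^ θ := mul_le_mul_of_nonneg_right hθ1 hBθ.le
              have := mul_le_mul_of_nonneg_right hm hW
              nlinarith
    have hcomm : B ^ θ * W = W * B ^ θ := mul_comm _ _
    have hWB : 0 ≤ W * B ^ θ := mul_nonneg hW hBθ.le
    linarith
  · -- far case: A > 2B, so W ≥ A/2
    push_neg at hc
    have h3 : A - B ≤ W := by
      have : A - B ≤ |A - B| := le_abs_self _
      linarith
    have hA2W : A ≤ 2 * W := by linarith
    have hWpos : 0 < W := by linarith
    have hBA : B ^ θ ≤ A ^ θ := Real.rpow_le_rpow hB.le (by linarith) hθ0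
    have hA2Wθ : A ^ θ ≤ 2 * W ^ θ := by
      calc A ^ θ ≤ (2 * W) ^ θ := Real.rpow_le_rpow hA.le hA2W hθ0
        _ = 2 ^ θ * W ^ θ := Real.mul_rpow (by norm_num) hW
        _ ≤ 2 * W ^ θ := by
            have h2θ : (2:ℝ) ^ θ ≤ 2 ^ (1:ℝ) :=
              Real.rpow_le_rpow_of_exponent_le (by norm_num) hθ1
            rw [Real.rpow_one] at h2θ
            exact mul_le_mul_of_nonneg_right h2θ hWθ
    have habs3 : |A ^ θ - B ^ θ| ≤ A ^ θ := by
      rw [abs_of_nonneg (by linarith)]; linarith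
    have hWθ1 : W ^ θ * W = W ^ (2 / p) := by
      rw [← Real.rpow_add_one hWpos.ne' θ]
      congr 1
      rw [hθdef]; field_simp; ring
    have step : B ^ θ * W + |A ^ θ - B ^ θ| * A ≤ 6 * W ^ (2 / p) := by
      have s1 : B ^ θ * W ≤ (2 * W ^ θ) * W :=
        mul_le_mul_of_nonneg_right (le_trans hBA hA2Wθ) hW
      have s2 : |A ^ θ - B ^ θ| * A ≤ (2 * W ^ θ) * (2 * W) :=
        mul_le_mul (le_trans habs3 hA2Wθ) hA2W hA.le (by positivity)
      have s3 : (2 * W ^ θ) * W + (2 * W ^ θ) * (2 * W) = 6 * (W ^ θ * W) := by ring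
      rw [← hWθ1]
      linarith
    have hWB : 0 ≤ 6 * W * B ^ θ := by positivity
    linarith

private lemma normV {m : ℕ} (p : ℝ) (hp : 0 < p) (z : EuclideanSpace ℝ (Fin m)) :
    ‖(‖z‖ ^ ((p - 2) / 2)) • z‖ = ‖z‖ ^ (p / 2) := by
  by_cases hz : z = 0
  · simp [hz, Real.zero_rpow (by positivity : p / 2 ≠ 0)]
  · have h0 : 0 < ‖z‖ := norm_pos_iff.mpr hz
    rw [norm_smul, Real.norm_rpow_of_nonneg (norm_nonneg z), norm_norm,
      ← Real.rpow_add_one h0.ne']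
    congr 1
    ring

theorem V_estimate_p_le_two (m : ℕ) (p : ℝ) (hp₁ : 1 < p) (hp₂ : p ≤ 2) :
    ∃ c : ℝ, 0 < c ∧ ∀ z₁ z₂ : EuclideanSpace ℝ (Fin m),
      ‖z₁ - z₂‖ ≤
        c * ‖(‖z₁‖ ^ ((p - 2) / 2)) • z₁ - (‖z₂‖ ^ ((p - 2) / 2)) • z₂‖ ^ (2 / p) +
        c * ‖(‖z₁‖ ^ ((p - 2) / 2)) • z₁ - (‖z₂‖ ^ ((p - 2) / 2)) • z₂‖ *
          ‖z₂‖ ^ ((2 - p) / 2) := by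
  have hp0 : 0 < p := by linarith
  refine ⟨6, by norm_num, fun z₁ z₂ => ?_⟩
  by_cases h1 : z₁ = 0
  · subst h1
    simp only [norm_zero, smul_zero, zero_sub, norm_neg]
    by_cases h2 : z₂ = 0
    · simp only [h2, norm_zero, smul_zero]
      positivity
    · have hb : 0 < ‖z₂‖ := norm_pos_iff.mpr h2
      rw [normV p hp0 z₂]
      have hpow : (‖z₂‖ ^ (p / 2)) ^ (2 / p) = ‖z₂‖ := by
        rw [← Real.rpow_mul (norm_nonneg z₂), show p / 2 * (2 / p) = 1 by field_simp]
        exact Real.rpow_one _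
      rw [hpow]
      have h6 : 0 ≤ 6 * ‖z₂‖ ^ (p / 2) * ‖z₂‖ ^ ((2 - p) / 2) := by positivity
      linarith [norm_nonneg z₂]
  · by_cases h2 : z₂ = 0
    · subst h2
      simp only [norm_zero, smul_zero, sub_zero]
      have ha : 0 < ‖z₁‖ := norm_pos_iff.mpr h1
      rw [normV p hp0 z₁]
      have hpow : (‖z₁‖ ^ (p / 2)) ^ (2 / p) = ‖z₁‖ := by
        rw [← Real.rpow_mul (norm_nonneg z₁), show p / 2 * (2 / p) = 1 by field_simp]
        exact Real.rpow_one _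
      rw [hpow]
      have h6 : 0 ≤ 6 * ‖z₁‖ ^ (p / 2) * (0:ℝ) ^ ((2 - p) / 2) := by positivity
      linarith [norm_nonneg z₁]
    · have ha : 0 < ‖z₁‖ := norm_pos_iff.mpr h1
      have hb : 0 < ‖z₂‖ := norm_pos_iff.mpr h2
      set W := ‖(‖z₁‖ ^ ((p - 2) / 2)) • z₁ - (‖z₂‖ ^ ((p - 2) / 2)) • z₂‖ with hWdef
      have hW : 0 ≤ W := norm_nonneg _
      have habs : |‖z₁‖ ^ (p / 2) - ‖z₂‖ ^ (p / 2)| ≤ W := by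
        rw [← normV p hp0 z₁, ← normV p hp0 z₂]
        exact abs_norm_sub_norm_le _ _
      have e₁ : (‖z₁‖ ^ ((2 - p) / 2)) • ((‖z₁‖ ^ ((p - 2) / 2)) • z₁) = z₁ := by
        rw [smul_smul, ← Real.rpow_add ha, show (2 - p) / 2 + (p - 2) / 2 = 0 by ring,
          Real.rpow_zero, one_smul]
      have e₂ : (‖z₂‖ ^ ((2 - p) / 2)) • ((‖z₂‖ ^ ((p - 2) / 2)) • z₂) = z₂ := by
        rw [smul_smul, ← Real.rpow_add hb, show (2 - p) / 2 + (p - 2) / 2 = 0 by ring,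
          Real.rpow_zero, one_smul]
      have eid : z₁ - z₂ =
          (‖z₂‖ ^ ((2 - p) / 2)) • ((‖z₁‖ ^ ((p - 2) / 2)) • z₁ - (‖z₂‖ ^ ((p - 2) / 2)) • z₂) +
          (‖z₁‖ ^ ((2 - p) / 2) - ‖z₂‖ ^ ((2 - p) / 2)) • ((‖z₁‖ ^ ((p - 2) / 2)) • z₁) := by
        rw [smul_sub, sub_smul, e₁, e₂]
        abel
      have hstep : ‖z₁ - z₂‖ ≤ ‖z₂‖ ^ ((2 - p) / 2) * W +
          |‖z₁‖ ^ ((2 - p) / 2) - ‖z₂‖ ^ ((2 - p) / 2)| * ‖z₁‖ ^ (p / 2) := by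
        rw [eid]
        refine le_trans (norm_add_le _ _) ?_
        rw [norm_smul, norm_smul, normV p hp0 z₁, Real.norm_eq_abs, Real.norm_eq_abs,
          abs_of_nonneg (Real.rpow_nonneg (norm_nonneg z₂) _)]
      exact le_trans hstep (main_arith p W ‖z₁‖ ‖z₂‖ hp₁ hp₂ ha hb hW habs)
end
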